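/- Let p be a prime, r ≥ 1, and let T = (Fin r → ℚ_[p]) ⧸ (Fin r → ℤ_[p]) be the discrete p-torus of rank r, on which a finite subgroup G of GL_r(ℤ_[p]) acts via the natural matrix action on Fin r → ℚ_[p] (which preserves the lattice Fin r → ℤ_[p] and hence descends to T). Then T has a G-invariant subgroup T₀ that is infinite and a proper subgroup of T if and only if there exists a ℚ_[p]-subspace W of Fin r → ℚ_[p] with ⊥ < W < ⊤ that is invariant under the action of every element of G. -/

import Mathlib

/-- The image of the `p`-adic integers in `ℚ_[p]`, as an additive subgroup. -/
noncomputable def padicIntAddSubgroup (p : ℕ) [Fact p.Prime] : AddSubgroup ℚ_[p] :=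
  (PadicInt.Coe.ringHom (p := p)).toAddMonoidHom.range

/-- The Prüfer `p`-group `ℤ(p^∞)`, realized as `ℚ_[p] ⧸ ℤ_[p]`. -/
abbrev ZpInfty (p : ℕ) [Fact p.Prime] : Type :=
  ℚ_[p] ⧸ padicIntAddSubgroup p

/-- The discrete `p`-torus of rank `r`. -/
abbrev DiscretePTorus (p : ℕ) [Fact p.Prime] (r : ℕ) : Type :=
  Fin r → ZpInfty p

/-- The lattice `Fin r → ℤ_[p]` inside `Fin r → ℚ_[p]`, as an additive subgroup. -/
noncomputable def padicLattice (p : ℕ) [Fact p.Prime] (r : ℕ) : AddSubgroup (Fin r → ℚ_[p]) :=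
  AddSubgroup.pi Set.univ fun _ : Fin r => padicIntAddSubgroup p

/-- The discrete `p`-torus presented as `(Fin r → ℚ_[p]) ⧸ (Fin r → ℤ_[p])`. -/
abbrev PadicTorusQuot (p : ℕ) [Fact p.Prime] (r : ℕ) : Type :=
  (Fin r → ℚ_[p]) ⧸ padicLattice p r

/-- A matrix over `ℤ_[p]`, viewed as a matrix over `ℚ_[p]`. -/
def matrixToPadic (p : ℕ) [Fact p.Prime] (r : ℕ) (M : Matrix (Fin r) (Fin r) ℤ_[p]) :
    Matrix (Fin r) (Fin r) ℚ_[p] :=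
  M.map fun a : ℤ_[p] => (a : ℚ_[p])

/-- An element of `GL_r(ℤ_[p])` preserves the lattice, hence acts on the quotient torus
`(Fin r → ℚ_[p]) ⧸ (Fin r → ℤ_[p])` by matrix-vector multiplication. -/
noncomputable def glActOnTorus (p : ℕ) [Fact p.Prime] (r : ℕ)
    (g : Matrix.GeneralLinearGroup (Fin r) ℤ_[p]) :
    PadicTorusQuot p r →+ PadicTorusQuot p r :=
  QuotientAddGroup.map (padicLattice p r) (padicLattice p r)
    (Matrix.mulVecLin (matrixToPadic p r (g : Matrix (Fin r) (Fin r) ℤ_[p]))).toAddMonoidHom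
    (by
      intro v hv
      intro i _
      choose w hw using fun j => hv j (Set.mem_univ j)
      refine ⟨∑ j, (g : Matrix (Fin r) (Fin r) ℤ_[p]) i j * w j, ?_⟩
      simp only [map_sum, map_mul]
      simp only [LinearMap.toAddMonoidHom_coe, Matrix.mulVecLin_apply, Matrix.mulVec,
        dotProduct, matrixToPadic, Matrix.map_apply]
      refine Finset.sum_congr rfl fun j _ => ?_
      simp only [RingHom.toAddMonoidHom_eq_coe, AddMonoidHom.coe_coe] at hw ⊢
      rw [map_mul, hw j]
      rfl)


section Helpers
open QuotientAddGroup

variable {p : ℕ} [Fact p.Prime] {r : ℕ}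

lemma mem_padicLattice {v : Fin r → ℚ_[p]} : v ∈ padicLattice p r ↔ ∀ i, ‖v i‖ ≤ 1 := by
  constructor
  · intro h i
    rcases h i (Set.mem_univ i) with ⟨a, ha⟩
    rw [← ha]; exact a.2
  · intro h i _
    exact ⟨⟨v i, h i⟩, rfl⟩

lemma p_cast_ne_zero : ((p:ℚ_[p]) ≠ 0) :=
  Nat.cast_ne_zero.mpr (Fact.out : p.Prime).ne_zero

lemma norm_p_pow_mul (n : ℕ) (x : ℚ_[p]) : ‖(p:ℚ_[p])^n * x‖ = ((p:ℝ)^n)⁻¹ * ‖x‖ := by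
  rw [norm_mul, norm_pow, Padic.norm_p, inv_pow]

lemma exists_pow_smul_mem_lattice (w : Fin r → ℚ_[p]) :
    ∃ n : ℕ, ∀ i, ‖(p:ℚ_[p])^n * w i‖ ≤ 1 := by
  have hp1 : (1:ℝ) < p := by exact_mod_cast (Fact.out : p.Prime).one_lt
  have : ∀ i : Fin r, ∃ n : ℕ, ‖w i‖ ≤ (p:ℝ)^n := fun i =>
    (pow_unbounded_of_one_lt (‖w i‖) hp1).imp fun n hn => hn.le
  choose f hf using this
  refine ⟨Finset.univ.sup f, fun i => ?_⟩
  rw [norm_p_pow_mul]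
  have h1 : ‖w i‖ ≤ (p:ℝ)^(Finset.univ.sup f) :=
    le_trans (hf i) (pow_le_pow_right₀ (le_of_lt hp1) (Finset.le_sup (Finset.mem_univ i)))
  rw [inv_mul_le_iff₀ (by positivity), mul_one]
  exact h1

lemma nsmul_vec_eq (m : ℕ) (w : Fin r → ℚ_[p]) :
    (m • w) = fun i => (m:ℚ_[p]) * w i := by
  funext i
  rw [← Nat.cast_smul_eq_nsmul ℚ_[p]]
  rfl

lemma torsion_finite (n : ℕ) :
    {x : PadicTorusQuot p r | (p^n : ℕ) • x = 0}.Finite := by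
  classical
  refine Set.Finite.subset (Set.finite_range
    (fun c : Fin r → Fin (p^n) =>
      (QuotientAddGroup.mk (fun i => (c i : ℚ_[p]) * ((p:ℚ_[p])^n)⁻¹) : PadicTorusQuot p r))) ?_
  rintro x hx
  obtain ⟨w, rfl⟩ := QuotientAddGroup.mk_surjective x
  have hx' : (p^n : ℕ) • (QuotientAddGroup.mk w : PadicTorusQuot p r) = 0 := hx
  rw [← QuotientAddGroup.mk_nsmul] at hx'
  have hmem : ((p^n : ℕ) • w) ∈ padicLattice p r := (QuotientAddGroup.eq_zero_iff _).1 hx'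
  rw [nsmul_vec_eq, mem_padicLattice] at hmem
  have hmem' : ∀ i, ‖(p:ℚ_[p])^n * w i‖ ≤ 1 := by
    intro i; have := hmem i; push_cast at this ⊢; exact this
  set u : Fin r → ℤ_[p] := fun i => ⟨(p:ℚ_[p])^n * w i, hmem' i⟩ with hu
  have hplt : ∀ i, (u i).appr n < p ^ n := fun i => PadicInt.appr_lt _ _
  refine ⟨fun i => ⟨(u i).appr n, hplt i⟩, ?_⟩
  rw [QuotientAddGroup.eq_iff_sub_mem, mem_padicLattice]
  intro i
  obtain ⟨b, hb⟩ := Ideal.mem_span_singleton'.1 (PadicInt.appr_spec n (u i))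
  have hbq : ((b * (p:ℤ_[p])^n : ℤ_[p]) : ℚ_[p]) = ((u i - ((u i).appr n : ℤ_[p]) : ℤ_[p]) : ℚ_[p]) :=
    congrArg _ hb
  push_cast at hbq
  have hpn : ((p:ℚ_[p])^n) ≠ 0 := pow_ne_zero _ p_cast_ne_zero
  have key : (((u i).appr n : ℚ_[p]) * ((p:ℚ_[p])^n)⁻¹) - w i = -(b:ℚ_[p]) := by
    field_simp
    linear_combination hbq
  show ‖(((u i).appr n : ℚ_[p]) * ((p:ℚ_[p])^n)⁻¹) - w i‖ ≤ 1
  rw [key, norm_neg]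
  exact b.property

lemma glActOnTorus_mk (g : Matrix.GeneralLinearGroup (Fin r) ℤ_[p]) (w : Fin r → ℚ_[p]) :
    glActOnTorus p r g (QuotientAddGroup.mk w) =
      QuotientAddGroup.mk
        (Matrix.mulVec (matrixToPadic p r (g : Matrix (Fin r) (Fin r) ℤ_[p])) w) :=
  QuotientAddGroup.map_mk _ _ _ _ w

lemma backward_dir (G : Subgroup (Matrix.GeneralLinearGroup (Fin r) ℤ_[p]))
    (W : Submodule ℚ_[p] (Fin r → ℚ_[p])) (hbot : ⊥ < W) (htop : W < ⊤)
    (hWinv : ∀ g ∈ G, ∀ v ∈ W,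
      Matrix.mulVec (matrixToPadic p r (g : Matrix (Fin r) (Fin r) ℤ_[p])) v ∈ W) :
    ∃ T₀ : AddSubgroup (PadicTorusQuot p r),
      (∀ g ∈ G, ∀ x ∈ T₀, glActOnTorus p r g x ∈ T₀) ∧
      (T₀ : Set (PadicTorusQuot p r)).Infinite ∧ T₀ ≠ ⊤ := by
  classical
  have hp1 : (1:ℝ) < p := by exact_mod_cast (Fact.out : p.Prime).one_lt
  set T₀ : AddSubgroup (PadicTorusQuot p r) :=
    (W.toAddSubgroup).map (QuotientAddGroup.mk' (padicLattice p r)) with hT₀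
  have memT₀ : ∀ x : PadicTorusQuot p r,
      x ∈ T₀ ↔ ∃ w ∈ W, QuotientAddGroup.mk w = x := by
    intro x
    simp [hT₀, AddSubgroup.mem_map, QuotientAddGroup.mk'_apply]
  refine ⟨T₀, ?_, ?_, ?_⟩
  · rintro g hg x hx
    obtain ⟨w, hw, rfl⟩ := (memT₀ x).1 hx
    rw [glActOnTorus_mk]
    exact (memT₀ _).2 ⟨_, hWinv g hg w hw, rfl⟩
  · -- infinite
    obtain ⟨v, hvW, hv0⟩ := SetLike.exists_of_lt hbot
    have hv : v ≠ 0 := by simpa using hv0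
    obtain ⟨i, hvi⟩ := Function.ne_iff.1 hv
    have hvi : v i ≠ 0 := by simpa using hvi
    have hc : 0 < ‖v i‖ := norm_pos_iff.2 hvi
    obtain ⟨k, hk⟩ := pow_unbounded_of_one_lt (‖v i‖)⁻¹ hp1
    have hk' : ((p:ℝ)^k)⁻¹ < ‖v i‖ := by
      rw [inv_lt_comm₀ (by positivity) hc]
      exact hk
    set f : ℕ → PadicTorusQuot p r :=
      fun a => QuotientAddGroup.mk (((p:ℚ_[p])^(a+k+1))⁻¹ • v) with hf
    have hfmem : ∀ a, f a ∈ (T₀ : Set (PadicTorusQuot p r)) := by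
      intro a
      exact (memT₀ _).2 ⟨_, W.smul_mem _ hvW, rfl⟩
    have hnorm : ∀ m : ℕ, ‖((p:ℚ_[p])^m)⁻¹‖ = (p:ℝ)^m := by
      intro m
      rw [norm_inv, norm_pow, Padic.norm_p, ← inv_pow, inv_inv]
    have hfinj : Function.Injective f := by
      intro a b hab
      by_contra hne
      wlog hlt : a < b generalizing a b
      · exact this hab.symm (Ne.symm hne) (by omega)
      rw [hf] at hab
      simp only at hab
      rw [QuotientAddGroup.eq_iff_sub_mem, ← sub_smul, mem_padicLattice] at hab
      have h1 := hab i
      rw [Pi.smul_apply, smul_eq_mul, norm_mul] at h1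
      set A := a + k + 1
      set B := b + k + 1
      have hAB : A < B := by omega
      have hB : (p:ℝ)^B - (p:ℝ)^A ≤ ‖((p:ℚ_[p])^A)⁻¹ - ((p:ℚ_[p])^B)⁻¹‖ := by
        calc (p:ℝ)^B - (p:ℝ)^A
            = ‖((p:ℚ_[p])^B)⁻¹‖ - ‖((p:ℚ_[p])^A)⁻¹‖ := by rw [hnorm, hnorm]
          _ ≤ ‖((p:ℚ_[p])^B)⁻¹ - ((p:ℚ_[p])^A)⁻¹‖ := norm_sub_norm_le _ _
          _ = ‖((p:ℚ_[p])^A)⁻¹ - ((p:ℚ_[p])^B)⁻¹‖ := norm_sub_rev _ _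
      have hBA : (p:ℝ)^(k+1) ≤ (p:ℝ)^B - (p:ℝ)^A := by
        have h2 : (p:ℝ)^A * 2 ≤ (p:ℝ)^A * p := by
          have : (2:ℝ) ≤ p := by exact_mod_cast (Fact.out : p.Prime).two_le
          nlinarith [pow_pos (by positivity : (0:ℝ) < p) A]
        have h3 : (p:ℝ)^(A+1) ≤ (p:ℝ)^B := pow_le_pow_right₀ hp1.le (by omega)
        have h4 : (p:ℝ)^(k+1) ≤ (p:ℝ)^A := pow_le_pow_right₀ hp1.le (by omega)
        rw [pow_succ] at h3
        nlinarith
      have hgt : 1 < ‖((p:ℚ_[p])^A)⁻¹ - ((p:ℚ_[p])^B)⁻¹‖ * ‖v i‖ := by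
        have h5 : (p:ℝ)^(k+1) * ((p:ℝ)^k)⁻¹ = p := by
          rw [pow_succ, mul_comm ((p:ℝ)^k), mul_assoc,
            mul_inv_cancel₀ (by positivity), mul_one]
        calc (1:ℝ) < p := hp1
          _ = (p:ℝ)^(k+1) * ((p:ℝ)^k)⁻¹ := h5.symm
          _ ≤ ‖((p:ℚ_[p])^A)⁻¹ - ((p:ℚ_[p])^B)⁻¹‖ * ‖v i‖ := by
              apply mul_le_mul (le_trans hBA hB) hk'.le (by positivity)
                (le_trans (by positivity) (le_trans hBA hB))
      exact absurd h1 (not_le.2 (by linarith))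
    exact Set.infinite_of_injective_forall_mem hfinj hfmem
  · -- proper
    intro hTtop
    obtain ⟨v, hvtop, hvW⟩ := SetLike.exists_of_lt htop
    have hWclosed : IsClosed (W : Set (Fin r → ℚ_[p])) :=
      Submodule.closed_of_finiteDimensional W
    -- for each n, find w_n ∈ W with (p^n)⁻¹ • v - w_n ∈ L
    have hall : ∀ n : ℕ, ∃ w ∈ W,
        ((p:ℚ_[p])^n)⁻¹ • v - w ∈ padicLattice p r := by
      intro n
      have : (QuotientAddGroup.mk (((p:ℚ_[p])^n)⁻¹ • v) : PadicTorusQuot p r) ∈ T₀ := by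
        rw [hTtop]; trivial
      obtain ⟨w, hw, hwe⟩ := (by
        simpa [hT₀, AddSubgroup.mem_map] using this :
          ∃ w ∈ W, QuotientAddGroup.mk' (padicLattice p r) w
            = (QuotientAddGroup.mk (((p:ℚ_[p])^n)⁻¹ • v) : PadicTorusQuot p r))
      refine ⟨w, hw, ?_⟩
      have := (QuotientAddGroup.eq_iff_sub_mem).1 (hwe : QuotientAddGroup.mk w = _)
      have h2 := neg_mem this
      simpa using h2
    choose wseq hwseqW hwseqL using hall
    have hpn0 : ∀ n : ℕ, ((p:ℚ_[p])^n) ≠ 0 := fun n => pow_ne_zero _ p_cast_ne_zero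
    have hdist : ∀ n : ℕ, dist ((p:ℚ_[p])^n • wseq n) v ≤ ((p:ℝ)⁻¹)^n := by
      intro n
      rw [dist_pi_le_iff (by positivity)]
      intro b
      have hL := mem_padicLattice.1 (hwseqL n) b
      rw [dist_eq_norm]
      have : ((p:ℚ_[p])^n • wseq n) b - v b
          = -((p:ℚ_[p])^n * ((((p:ℚ_[p])^n)⁻¹ • v - wseq n) b)) := by
        rw [Pi.smul_apply, Pi.sub_apply, Pi.smul_apply, smul_eq_mul, smul_eq_mul,
          mul_sub, ← mul_assoc, mul_inv_cancel₀ (hpn0 n), one_mul, neg_sub]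
      rw [this, norm_neg, norm_mul, norm_pow, Padic.norm_p]
      calc ((p:ℝ)⁻¹)^n * ‖(((p:ℚ_[p])^n)⁻¹ • v - wseq n) b‖
          ≤ ((p:ℝ)⁻¹)^n * 1 := by
            apply mul_le_mul_of_nonneg_left hL (by positivity)
        _ = ((p:ℝ)⁻¹)^n := mul_one _
    have htend : Filter.Tendsto (fun n => (p:ℚ_[p])^n • wseq n) Filter.atTop (nhds v) := by
      rw [tendsto_iff_dist_tendsto_zero]
      apply squeeze_zero (fun n => dist_nonneg) hdist
      apply tendsto_pow_atTop_nhds_zero_of_lt_one (by positivity)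
      rw [inv_lt_one_iff₀]
      right; exact hp1
    have hvmem : v ∈ W := hWclosed.mem_of_tendsto htend
      (Filter.Eventually.of_forall (fun n => W.smul_mem _ (hwseqW n)))
    exact hvW hvmem

/-- Coercion of an integral vector to a rational vector. -/
def cvec (u : Fin r → ℤ_[p]) : Fin r → ℚ_[p] := fun i => (u i : ℚ_[p])

lemma exists_torsion_exp (x : PadicTorusQuot p r) : ∃ n : ℕ, (p^n : ℕ) • x = 0 := by
  obtain ⟨w, rfl⟩ := QuotientAddGroup.mk_surjective x
  obtain ⟨n, hn⟩ := exists_pow_smul_mem_lattice w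
  refine ⟨n, ?_⟩
  rw [← QuotientAddGroup.mk_nsmul, QuotientAddGroup.eq_zero_iff, nsmul_vec_eq,
    mem_padicLattice]
  intro i
  have := hn i
  push_cast
  exact this

lemma closed_S (T₀ : AddSubgroup (PadicTorusQuot p r)) (m : ℕ) :
    IsClosed {u : Fin r → ℤ_[p] |
      (QuotientAddGroup.mk (((p:ℚ_[p])^m)⁻¹ • cvec u) : PadicTorusQuot p r) ∈ T₀} := by
  have hp1 : (1:ℝ) < p := by exact_mod_cast (Fact.out : p.Prime).one_lt
  rw [← isOpen_compl_iff]
  rw [Metric.isOpen_iff]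
  intro u hu
  refine ⟨((p:ℝ)^m)⁻¹, by positivity, ?_⟩
  intro u' hu'
  have key : (QuotientAddGroup.mk (((p:ℚ_[p])^m)⁻¹ • cvec u') : PadicTorusQuot p r)
      = QuotientAddGroup.mk (((p:ℚ_[p])^m)⁻¹ • cvec u) := by
    rw [QuotientAddGroup.eq_iff_sub_mem, ← smul_sub, mem_padicLattice]
    intro i
    rw [Pi.smul_apply, smul_eq_mul, norm_mul, norm_inv, norm_pow, Padic.norm_p,
      inv_pow, inv_inv]
    have h1 : dist (u' i) (u i) ≤ dist u' u := dist_le_pi_dist u' u i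
    have h2 : ‖(cvec u' - cvec u) i‖ = dist (u' i) (u i) := by
      show ‖((u' i : ℚ_[p]) - (u i : ℚ_[p]))‖ = _
      rw [dist_eq_norm, ← PadicInt.coe_sub, PadicInt.padic_norm_e_of_padicInt]
    rw [h2]
    calc (p:ℝ)^m * dist (u' i) (u i)
        ≤ (p:ℝ)^m * dist u' u := mul_le_mul_of_nonneg_left h1 (by positivity)
      _ ≤ (p:ℝ)^m * ((p:ℝ)^m)⁻¹ := by
          apply mul_le_mul_of_nonneg_left (le_of_lt (Metric.mem_ball.1 hu')) (by positivity)
      _ = 1 := mul_inv_cancel₀ (by positivity)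
  intro hmem
  have hmem' : (QuotientAddGroup.mk (((p:ℚ_[p])^m)⁻¹ • cvec u') : PadicTorusQuot p r) ∈ T₀ :=
    hmem
  rw [key] at hmem'
  exact hu hmem'

lemma closed_sphere :
    IsClosed {u : Fin r → ℤ_[p] | ∃ i, ‖u i‖ = 1} := by
  have : {u : Fin r → ℤ_[p] | ∃ i, ‖u i‖ = 1}
      = ⋃ i : Fin r, (fun u : Fin r → ℤ_[p] => u i) ⁻¹' {a : ℤ_[p] | ‖a‖ = 1} := by
    ext u; simp
  rw [this]
  exact isClosed_iUnion_of_finite fun i =>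
    IsClosed.preimage (continuous_apply i) (isClosed_eq continuous_norm continuous_const)

lemma nonempty_K (T₀ : AddSubgroup (PadicTorusQuot p r))
    (hinf : (T₀ : Set (PadicTorusQuot p r)).Infinite) (n : ℕ) :
    ∃ u : Fin r → ℤ_[p], (∃ i, ‖u i‖ = 1) ∧
      ∀ m ≤ n, (QuotientAddGroup.mk (((p:ℚ_[p])^m)⁻¹ • cvec u) : PadicTorusQuot p r) ∈ T₀ := by
  classical
  obtain ⟨x, hxT, hxn⟩ :
      ∃ x, x ∈ (T₀ : Set (PadicTorusQuot p r)) ∧ ¬ ((p^n : ℕ) • x = 0) := by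
    obtain ⟨x, hx⟩ := (hinf.diff (torsion_finite n)).nonempty
    exact ⟨x, hx.1, hx.2⟩
  have hex := exists_torsion_exp x
  set N := Nat.find hex with hN
  have hNspec : (p^N : ℕ) • x = 0 := Nat.find_spec hex
  have hnN : n < N := by
    by_contra h
    push_neg at h
    apply hxn
    have : (p^n : ℕ) = p^N * p^(n-N) := by rw [← pow_add]; congr 1; omega
    rw [this, mul_nsmul, hNspec, nsmul_zero]
  have hN1 : 1 ≤ N := by omega
  have hNm1 : ¬ ((p^(N-1) : ℕ) • x = 0) := Nat.find_min hex (by omega)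
  obtain ⟨w, rfl⟩ := QuotientAddGroup.mk_surjective x
  have hNL : ((p^N : ℕ) • w) ∈ padicLattice p r := by
    rw [← QuotientAddGroup.eq_zero_iff, QuotientAddGroup.mk_nsmul]
    exact hNspec
  rw [nsmul_vec_eq, mem_padicLattice] at hNL
  have hcoord : ∀ i, ‖(p:ℚ_[p])^N * w i‖ ≤ 1 := by
    intro i; have := hNL i; push_cast at this ⊢; exact this
  set u : Fin r → ℤ_[p] := fun i => ⟨(p:ℚ_[p])^N * w i, hcoord i⟩ with hu
  have hNm1L : ¬ ((p^(N-1) : ℕ) • w) ∈ padicLattice p r := by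
    intro hmem
    apply hNm1
    rw [← QuotientAddGroup.mk_nsmul, QuotientAddGroup.eq_zero_iff]
    exact hmem
  rw [nsmul_vec_eq, mem_padicLattice] at hNm1L
  push_neg at hNm1L
  obtain ⟨i, hi⟩ := hNm1L
  have hi' : 1 < ‖(p:ℚ_[p])^(N-1) * w i‖ := by
    push_cast at hi
    exact hi
  refine ⟨u, ⟨i, ?_⟩, ?_⟩
  · -- ‖u i‖ = 1
    rcases lt_or_eq_of_le (u i).2 with hlt | heq
    · exfalso
      have hlt' : ‖u i‖ < 1 := hlt
      obtain ⟨y, hy⟩ := (PadicInt.norm_lt_one_iff_dvd _).1 hlt'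
      have hyq : ((u i : ℚ_[p])) = (p:ℚ_[p]) * (y:ℚ_[p]) := by
        rw [hy]; push_cast; ring
      have huiq : ((u i : ℚ_[p])) = (p:ℚ_[p])^N * w i := rfl
      have hsplit : (p:ℚ_[p])^N * w i = (p:ℚ_[p]) * ((p:ℚ_[p])^(N-1) * w i) := by
        rw [← mul_assoc, ← pow_succ']
        congr 2
        omega
      have : (p:ℚ_[p])^(N-1) * w i = (y:ℚ_[p]) := by
        have hpne : (p:ℚ_[p]) ≠ 0 := p_cast_ne_zero
        refine mul_left_cancel₀ hpne ?_
        rw [← hsplit]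
        exact hyq
      rw [this] at hi'
      exact absurd y.2 (not_le.2 hi')
    · rw [PadicInt.padic_norm_e_of_padicInt] at heq
      exact heq
  · intro m hm
    have hcv : ((p:ℚ_[p])^m)⁻¹ • cvec u = (p^(N-m) : ℕ) • w := by
      funext j
      rw [nsmul_vec_eq]
      show ((p:ℚ_[p])^m)⁻¹ * ((p:ℚ_[p])^N * w j) = _
      push_cast
      rw [pow_sub₀ _ p_cast_ne_zero (by omega : m ≤ N)]
      field_simp
    rw [hcv, QuotientAddGroup.mk_nsmul]
    exact AddSubgroup.nsmul_mem T₀ hxT _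

lemma forward_dir (G : Subgroup (Matrix.GeneralLinearGroup (Fin r) ℤ_[p]))
    (T₀ : AddSubgroup (PadicTorusQuot p r))
    (hTinv : ∀ g ∈ G, ∀ x ∈ T₀, glActOnTorus p r g x ∈ T₀)
    (hinf : (T₀ : Set (PadicTorusQuot p r)).Infinite) (hne : T₀ ≠ ⊤) :
    ∃ W : Submodule ℚ_[p] (Fin r → ℚ_[p]), ⊥ < W ∧ W < ⊤ ∧
      ∀ g ∈ G, ∀ v ∈ W,
        Matrix.mulVec (matrixToPadic p r (g : Matrix (Fin r) (Fin r) ℤ_[p])) v ∈ W := by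
  classical
  have hp1 : (1:ℝ) < p := by exact_mod_cast (Fact.out : p.Prime).one_lt
  -- the nested compact sets
  set K : ℕ → Set (Fin r → ℤ_[p]) := fun n =>
    {u | (∃ i, ‖u i‖ = 1) ∧ ∀ m ≤ n,
      (QuotientAddGroup.mk (((p:ℚ_[p])^m)⁻¹ • cvec u) : PadicTorusQuot p r) ∈ T₀} with hK
  have hKclosed : ∀ n, IsClosed (K n) := by
    intro n
    have : K n = {u : Fin r → ℤ_[p] | ∃ i, ‖u i‖ = 1} ∩
        ⋂ (m : ℕ) (_ : m ≤ n), {u : Fin r → ℤ_[p] |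
          (QuotientAddGroup.mk (((p:ℚ_[p])^m)⁻¹ • cvec u) : PadicTorusQuot p r) ∈ T₀} := by
      ext u
      simp only [hK, Set.mem_setOf_eq, Set.mem_inter_iff, Set.mem_iInter]
    rw [this]
    exact IsClosed.inter closed_sphere
      (isClosed_iInter fun m => isClosed_iInter fun _ => closed_S T₀ m)
  have hKmono : ∀ n, K (n+1) ⊆ K n := by
    intro n u hu
    exact ⟨hu.1, fun m hm => hu.2 m (by omega)⟩
  have hKne : ∀ n, (K n).Nonempty := by
    intro n
    obtain ⟨u, h1, h2⟩ := nonempty_K T₀ hinf n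
    exact ⟨u, h1, h2⟩
  obtain ⟨u, hu⟩ := IsCompact.nonempty_iInter_of_sequence_nonempty_isCompact_isClosed
    K hKmono hKne ((hKclosed 0).isCompact) hKclosed
  have huK : ∀ n, u ∈ K n := fun n => Set.mem_iInter.1 hu n
  have humem : ∀ m : ℕ,
      (QuotientAddGroup.mk (((p:ℚ_[p])^m)⁻¹ • cvec u) : PadicTorusQuot p r) ∈ T₀ :=
    fun m => (huK m).2 m le_rfl
  obtain ⟨i₀, hi₀⟩ := (huK 0).1
  -- closure properties of the candidate carrier
  have hsmulZ : ∀ (a : ℤ_[p]) (v : Fin r → ℚ_[p]),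
      (∀ m : ℕ, (QuotientAddGroup.mk (((p:ℚ_[p])^m)⁻¹ • v) : PadicTorusQuot p r) ∈ T₀) →
      ∀ m : ℕ, (QuotientAddGroup.mk (((p:ℚ_[p])^m)⁻¹ • ((a:ℚ_[p]) • v)) :
        PadicTorusQuot p r) ∈ T₀ := by
    intro a v hv m
    obtain ⟨M, hM⟩ := exists_pow_smul_mem_lattice v
    set k := a.appr (m+M) with hk
    obtain ⟨b, hb⟩ := Ideal.mem_span_singleton'.1 (PadicInt.appr_spec (m+M) a)
    have hbq : ((b * (p:ℤ_[p])^(m+M) : ℤ_[p]) : ℚ_[p])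
        = ((a - (k:ℤ_[p]) : ℤ_[p]) : ℚ_[p]) := congrArg _ hb
    push_cast at hbq
    have hpm : ((p:ℚ_[p])^m) ≠ 0 := pow_ne_zero _ p_cast_ne_zero
    have key : (QuotientAddGroup.mk (((p:ℚ_[p])^m)⁻¹ • ((a:ℚ_[p]) • v)) :
        PadicTorusQuot p r) = k • QuotientAddGroup.mk (((p:ℚ_[p])^m)⁻¹ • v) := by
      rw [← QuotientAddGroup.mk_nsmul, QuotientAddGroup.eq_iff_sub_mem]
      have hks : (k • (((p:ℚ_[p])^m)⁻¹ • v)) = ((k:ℚ_[p]) * ((p:ℚ_[p])^m)⁻¹) • v := by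
        rw [← Nat.cast_smul_eq_nsmul ℚ_[p], smul_smul]
      have hscal : ((p:ℚ_[p])^m)⁻¹ * (a:ℚ_[p]) - (k:ℚ_[p]) * ((p:ℚ_[p])^m)⁻¹
          = (b:ℚ_[p]) * (p:ℚ_[p])^M := by
        calc ((p:ℚ_[p])^m)⁻¹ * (a:ℚ_[p]) - (k:ℚ_[p]) * ((p:ℚ_[p])^m)⁻¹
            = ((a:ℚ_[p]) - (k:ℚ_[p])) * ((p:ℚ_[p])^m)⁻¹ := by ring
          _ = ((b:ℚ_[p]) * (p:ℚ_[p])^(m+M)) * ((p:ℚ_[p])^m)⁻¹ := by rw [hbq]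
          _ = (b:ℚ_[p]) * (p:ℚ_[p])^M := by
              rw [pow_add]
              field_simp
      rw [smul_smul, hks, ← sub_smul, mem_padicLattice]
      intro j
      rw [Pi.smul_apply, smul_eq_mul, hscal, mul_assoc, norm_mul]
      calc ‖(b:ℚ_[p])‖ * ‖(p:ℚ_[p])^M * v j‖ ≤ 1 * 1 :=
          mul_le_mul b.property (hM j) (norm_nonneg _) zero_le_one
        _ = 1 := mul_one 1
    rw [key]
    exact AddSubgroup.nsmul_mem T₀ (hv m) _
  have hsmulInv : ∀ (n : ℕ) (v : Fin r → ℚ_[p]),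
      (∀ m : ℕ, (QuotientAddGroup.mk (((p:ℚ_[p])^m)⁻¹ • v) : PadicTorusQuot p r) ∈ T₀) →
      ∀ m : ℕ, (QuotientAddGroup.mk (((p:ℚ_[p])^m)⁻¹ • (((p:ℚ_[p])^n)⁻¹ • v)) :
        PadicTorusQuot p r) ∈ T₀ := by
    intro n v hv m
    have : (((p:ℚ_[p])^m)⁻¹ • (((p:ℚ_[p])^n)⁻¹ • v)) = ((p:ℚ_[p])^(m+n))⁻¹ • v := by
      rw [smul_smul, ← mul_inv, ← pow_add]
    rw [this]
    exact hv (m+n)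
  set W : Submodule ℚ_[p] (Fin r → ℚ_[p]) :=
    { carrier := {v | ∀ m : ℕ,
        (QuotientAddGroup.mk (((p:ℚ_[p])^m)⁻¹ • v) : PadicTorusQuot p r) ∈ T₀}
      add_mem' := by
        intro x y hx hy m
        rw [smul_add]
        show (QuotientAddGroup.mk _ + QuotientAddGroup.mk _ : PadicTorusQuot p r) ∈ T₀
        exact T₀.add_mem (hx m) (hy m)
      zero_mem' := by
        intro m
        rw [smul_zero]
        show ((0 : PadicTorusQuot p r) ∈ T₀)
        exact T₀.zero_mem
      smul_mem' := by
        intro c v hv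
        by_cases hc : c = 0
        · subst hc
          rw [zero_smul]
          intro m
          rw [smul_zero]
          show ((0 : PadicTorusQuot p r) ∈ T₀)
          exact T₀.zero_mem
        · obtain ⟨n, hn⟩ := pow_unbounded_of_one_lt (‖c‖) hp1
          have hbound : ‖(p:ℚ_[p])^n * c‖ ≤ 1 := by
            rw [norm_mul, norm_pow, Padic.norm_p]
            rw [inv_pow]
            rw [inv_mul_le_iff₀ (by positivity), mul_one]
            exact hn.le
          set a : ℤ_[p] := ⟨(p:ℚ_[p])^n * c, hbound⟩ with ha
          have hdecomp : c • v = ((p:ℚ_[p])^n)⁻¹ • ((a:ℚ_[p]) • v) := by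
            show c • v = ((p:ℚ_[p])^n)⁻¹ • (((p:ℚ_[p])^n * c) • v)
            rw [smul_smul, ← mul_assoc,
              inv_mul_cancel₀ (pow_ne_zero _ p_cast_ne_zero), one_mul]
          rw [hdecomp]
          exact hsmulInv n _ (hsmulZ a v hv) } with hW
  have hmemW : ∀ v : Fin r → ℚ_[p], v ∈ W ↔ ∀ m : ℕ,
      (QuotientAddGroup.mk (((p:ℚ_[p])^m)⁻¹ • v) : PadicTorusQuot p r) ∈ T₀ :=
    fun v => Iff.rfl
  refine ⟨W, ?_, ?_, ?_⟩
  · -- ⊥ < W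
    rw [bot_lt_iff_ne_bot]
    intro hbot
    have hcv : cvec u ∈ W := (hmemW _).2 humem
    rw [hbot, Submodule.mem_bot] at hcv
    have : cvec u i₀ = 0 := by rw [hcv]; rfl
    have : ‖(u i₀ : ℚ_[p])‖ = 0 := by rw [show ((u i₀ : ℚ_[p])) = cvec u i₀ from rfl, this, norm_zero]
    rw [PadicInt.padic_norm_e_of_padicInt, hi₀] at this
    exact one_ne_zero this
  · -- W < ⊤
    rw [lt_top_iff_ne_top]
    intro htop
    apply hne
    rw [AddSubgroup.eq_top_iff']
    intro x
    obtain ⟨w, rfl⟩ := QuotientAddGroup.mk_surjective x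
    have hw : w ∈ W := htop ▸ Submodule.mem_top
    have := (hmemW w).1 hw 0
    simpa using this
  · -- invariance
    intro g hg v hv
    rw [hmemW]
    intro m
    have hcomm : ((p:ℚ_[p])^m)⁻¹ •
        Matrix.mulVec (matrixToPadic p r (g : Matrix (Fin r) (Fin r) ℤ_[p])) v
        = Matrix.mulVec (matrixToPadic p r (g : Matrix (Fin r) (Fin r) ℤ_[p]))
          (((p:ℚ_[p])^m)⁻¹ • v) := by
      rw [Matrix.mulVec_smul]
    rw [hcomm, ← glActOnTorus_mk]
    exact hTinv g hg _ ((hmemW v).1 hv m)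

end Helpers

/-- Let `T = (Fin r → ℚ_[p]) ⧸ (Fin r → ℤ_[p])` with `r ≥ 1`, and let
`G` be a finite subgroup of `GL_r(ℤ_[p])`, acting on `T` as above.  Then `T` has an
infinite proper `G`-invariant subgroup if and only if the `ℚ_[p]`-vector space
`Fin r → ℚ_[p]` has a nontrivial proper `G`-invariant subspace. -/
theorem exists_invariant_infinite_proper_subgroup_iff_reducible
    (p : ℕ) [Fact p.Prime] (r : ℕ) (hr : 1 ≤ r)
    (G : Subgroup (Matrix.GeneralLinearGroup (Fin r) ℤ_[p])) (hG : Finite G) :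
    (∃ T₀ : AddSubgroup (PadicTorusQuot p r),
        (∀ g ∈ G, ∀ x ∈ T₀, glActOnTorus p r g x ∈ T₀) ∧
        (T₀ : Set (PadicTorusQuot p r)).Infinite ∧ T₀ ≠ ⊤) ↔
    (∃ W : Submodule ℚ_[p] (Fin r → ℚ_[p]), ⊥ < W ∧ W < ⊤ ∧
        ∀ g ∈ G, ∀ v ∈ W,
          Matrix.mulVec (matrixToPadic p r (g : Matrix (Fin r) (Fin r) ℤ_[p])) v ∈ W) := by
  constructor
  · rintro ⟨T₀, h1, h2, h3⟩
    exact forward_dir G T₀ h1 h2 h3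
  · rintro ⟨W, h1, h2, h3⟩
    exact backward_dir G W h1 h2 h3
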